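/- For every m ≥ 0: there exists a player-1 strategy π_1 in the labeled game graph Ḡ such that for every player-2 strategy π_2, |L(ω(v_in,π_1,π_2))| ≥ m + 1, if and only if every vertex cover of the graph G has size at least m. Equivalently, the maximal number of propositions player 1 can guarantee to visit in Ḡ equals the minimum size of a vertex cover of G plus one. -/

import Mathlib

/-- `π` is a valid strategy for the player owning the vertices satisfying `owns`:
for every history `w` and current vertex `v` owned by the player, the chosen
successor `π w v` is along an edge of the game graph. -/
def IsStrat {V : Type*} (E : V → V → Prop) (owns : V → Prop)
    (π : List V → V → V) : Prop :=
  ∀ (w : List V) (v : V), owns v → E v (π w v)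

/-- Auxiliary function computing, after `i` steps of the play from `v`, the pair
(current vertex, history of previously visited vertices).  Here `P1 v = true` means
`v` is a player-1 vertex, and `P1 v = false` that it is a player-2 vertex. -/
def playSeq {V : Type*} (P1 : V → Bool) (π1 π2 : List V → V → V) (v : V) :
    ℕ → V × List V
  | 0 => (v, [])
  | i + 1 =>
    let p := playSeq P1 π1 π2 v i
    (if P1 p.1 then π1 p.2 p.1 else π2 p.2 p.1, p.2 ++ [p.1])

/-- The unique play `ω(v, π1, π2)`: the `i`-th vertex of the infinite play starting
at `v` in which player 1 (resp. player 2) resolves choices at vertices `u` with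
`P1 u = true` (resp. `P1 u = false`) using strategy `π1` (resp. `π2`). -/
def play {V : Type*} (P1 : V → Bool) (π1 π2 : List V → V → V) (v : V) (i : ℕ) : V :=
  (playSeq P1 π1 π2 v i).1

/-- `U` is a vertex cover of the undirected graph `G`: every edge of `G` has at
least one endpoint in `U`. -/
def IsVertexCover {V : Type*} (G : SimpleGraph V) (U : Set V) : Prop :=
  ∀ a b : V, G.Adj a b → a ∈ U ∨ b ∈ U

/-- The vertices of the labeled game graph `Ḡ` built from the undirected graph `G`:
the initial vertex `v_in` (`Sum.inl ()`), a vertex for each edge `e` of `G`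
(`Sum.inr (Sum.inl e)`), and a vertex `(e,u)` for each edge `e` and endpoint `u` of
`e` (`Sum.inr (Sum.inr ...)`). -/
def BarV {V : Type*} (G : SimpleGraph V) : Type _ :=
  Unit ⊕ (G.edgeSet ⊕ {p : Sym2 V × V // p.1 ∈ G.edgeSet ∧ p.2 ∈ p.1})

/-- The edges of `Ḡ`: from `v_in` to every edge-vertex, from each edge-vertex `e` to
the endpoint vertices `(e,u)` with `u ∈ e`, and from every endpoint vertex back to
`v_in`. -/
def BarE {V : Type*} (G : SimpleGraph V) : BarV G → BarV G → Prop
  | Sum.inl _, Sum.inr (Sum.inl _) => True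
  | Sum.inr (Sum.inl e), Sum.inr (Sum.inr p) => p.val.1 = e.val
  | Sum.inr (Sum.inr _), Sum.inl _ => True
  | _, _ => False

/-- The partition of the vertices of `Ḡ`: the edge-vertices belong to player 2 and
all other vertices belong to player 1. -/
def BarP1 {V : Type*} (G : SimpleGraph V) : BarV G → Bool
  | Sum.inr (Sum.inl _) => false
  | _ => true

/-- The labeling of `Ḡ` with propositions `AP = V ∪ {$}`, encoded as `Option V`
(with `none` playing the role of `$`): the initial vertex and the edge-vertices are
labeled `{$}`, and each endpoint vertex `(e,u)` is labeled `{u}`. -/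
def BarL {V : Type*} (G : SimpleGraph V) : BarV G → Set (Option V)
  | Sum.inr (Sum.inr p) => {some p.val.2}
  | _ => {none}


section VCGameAux

variable {V : Type*} (G : SimpleGraph V)

/-- Generic play lemmas. -/
lemma play_succ {W : Type*} (P1 : W → Bool) (π1 π2 : List W → W → W) (v : W) (i : ℕ) :
    play P1 π1 π2 v (i + 1) =
      (if P1 (play P1 π1 π2 v i) then π1 (playSeq P1 π1 π2 v i).2 (play P1 π1 π2 v i)
       else π2 (playSeq P1 π1 π2 v i).2 (play P1 π1 π2 v i)) := rfl

lemma playSeq_succ_snd {W : Type*} (P1 : W → Bool) (π1 π2 : List W → W → W) (v : W) (i : ℕ) :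
    (playSeq P1 π1 π2 v (i + 1)).2 =
      (playSeq P1 π1 π2 v i).2 ++ [play P1 π1 π2 v i] := rfl

lemma mem_playSeq_snd {W : Type*} (P1 : W → Bool) (π1 π2 : List W → W → W) (v : W)
    (i : ℕ) (x : W) (hx : x ∈ (playSeq P1 π1 π2 v i).2) :
    ∃ j, play P1 π1 π2 v j = x := by
  induction i with
  | zero => simp [playSeq] at hx
  | succ i ih =>
    rw [playSeq_succ_snd] at hx
    rcases List.mem_append.1 hx with h | h
    · exact ih h
    · exact ⟨i, (List.mem_singleton.1 h).symm⟩

/-- Vertices collected from endpoint vertices occurring in a history. -/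
def collectedVC (w : List (BarV G)) : Set V :=
  {u | ∃ p : {p : Sym2 V × V // p.1 ∈ G.edgeSet ∧ p.2 ∈ p.1},
      (Sum.inr (Sum.inr p) : BarV G) ∈ w ∧ p.val.2 = u}

lemma collectedVC_mono (w w' : List (BarV G)) :
    collectedVC G w ⊆ collectedVC G (w ++ w') := by
  rintro u ⟨p, hp, hu⟩
  exact ⟨p, List.mem_append_left _ hp, hu⟩

open Classical in
/-- Player 1's greedy strategy: at `v_in`, choose an edge both of whose endpoints are
fresh, if possible; otherwise a fixed edge `e0`.  From endpoint vertices return to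
`v_in`. -/
noncomputable def strat1VC (e0 : G.edgeSet) : List (BarV G) → BarV G → BarV G :=
  fun w v =>
    match v with
    | Sum.inl _ =>
        if h : ∃ a b, G.Adj a b ∧ a ∉ collectedVC G w ∧ b ∉ collectedVC G w then
          Sum.inr (Sum.inl ⟨s(h.choose, h.choose_spec.choose),
            G.mem_edgeSet.mpr h.choose_spec.choose_spec.1⟩)
        else Sum.inr (Sum.inl e0)
    | _ => Sum.inl ()

lemma strat1VC_isStrat (e0 : G.edgeSet) :
    IsStrat (BarE G) (fun v => BarP1 G v = true) (strat1VC G e0) := by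
  intro w v hv
  match v with
  | Sum.inl u =>
    show BarE G (Sum.inl u) (strat1VC G e0 w (Sum.inl u))
    dsimp only [strat1VC]
    split_ifs with hc
    · erw [dif_pos hc]; trivial
    · erw [dif_neg hc]; trivial
  | Sum.inr (Sum.inl e) => simp [BarP1] at hv
  | Sum.inr (Sum.inr p) => trivial

lemma barE_edge_succ (e : G.edgeSet) (x : BarV G) (h : BarE G (Sum.inr (Sum.inl e)) x) :
    ∃ p, x = Sum.inr (Sum.inr p) ∧ p.val.1 = e.val := by
  match x with
  | Sum.inl u => exact absurd h (by intro h; exact h)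
  | Sum.inr (Sum.inl e') => exact absurd h (by intro h; exact h)
  | Sum.inr (Sum.inr p) => exact ⟨p, rfl, h⟩

end VCGameAux

/-- For every `m ≥ 0`: there exists a player-1 strategy `π_1` in the labeled game
graph `Ḡ` such that for every player-2 strategy `π_2`,
`|L(ω(v_in,π_1,π_2))| ≥ m + 1`, if and only if every vertex cover of the graph `G`
has size at least `m`.  Equivalently, the maximal number of propositions player 1
can guarantee to visit in `Ḡ` equals the minimum size of a vertex cover of `G`
plus one. -/

theorem game_coverage_iff_vertex_cover_lower_bound
    {V : Type*} [Fintype V] (G : SimpleGraph V) (hne : G.edgeSet.Nonempty)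
    (m : ℕ) :
    (∃ π1, IsStrat (BarE G) (fun v => BarP1 G v = true) π1 ∧
        ∀ π2, IsStrat (BarE G) (fun v => BarP1 G v = false) π2 →
          m + 1 ≤ (⋃ i : ℕ, BarL G (play (BarP1 G) π1 π2 (Sum.inl ()) i)).ncard) ↔
      (∀ U : Set V, IsVertexCover G U → m ≤ U.ncard) := by
  classical
  constructor
  · rintro ⟨π1, hπ1, hwin⟩ U hU
    have hpick : ∀ e : G.edgeSet, ∃ u, u ∈ U ∧ u ∈ (e : Sym2 V) := by
      rintro ⟨e, he⟩
      induction e using Sym2.ind with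
      | _ a b =>
        rcases hU a b (G.mem_edgeSet.mp he) with h | h
        · exact ⟨a, h, Sym2.mem_mk_left a b⟩
        · exact ⟨b, h, Sym2.mem_mk_right a b⟩
    choose f hfU hfe using hpick
    set π2 : List (BarV G) → BarV G → BarV G := fun _ v =>
      match v with
      | Sum.inr (Sum.inl e) => Sum.inr (Sum.inr ⟨(e.val, f e), e.property, hfe e⟩)
      | _ => Sum.inl () with hπ2def
    have hπ2 : IsStrat (BarE G) (fun v => BarP1 G v = false) π2 := by
      intro w v hv
      match v with
      | Sum.inr (Sum.inl e) => exact rfl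
      | Sum.inl u => simp [BarP1] at hv
      | Sum.inr (Sum.inr p) => simp [BarP1] at hv
    have hstep1 : ∀ (w : List (BarV G)) (v : BarV G), BarP1 G v = true →
        BarL G (π1 w v) = {none} := by
      intro w v hv
      have h := hπ1 w v hv
      match v with
      | Sum.inl u =>
        rcases h' : π1 w (Sum.inl u) with u' | e' | p' <;> rw [h'] at h
        · exact absurd h (by intro h; exact h)
        · rfl
        · exact absurd h (by intro h; exact h)
      | Sum.inr (Sum.inl e) => simp [BarP1] at hv
      | Sum.inr (Sum.inr p) =>
        rcases h' : π1 w (Sum.inr (Sum.inr p)) with u' | e' | p' <;> rw [h'] at h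
        · rfl
        · exact absurd h (by intro h; exact h)
        · exact absurd h (by intro h; exact h)
    have hsub : (⋃ i, BarL G (play (BarP1 G) π1 π2 (Sum.inl ()) i)) ⊆
        insert none (some '' U) := by
      rintro x hx
      rcases Set.mem_iUnion.1 hx with ⟨i, hi⟩
      match i with
      | 0 =>
        have : x = none := hi
        simp [this]
      | i + 1 =>
        erw [play_succ] at hi
        rcases hp : play (BarP1 G) π1 π2 (Sum.inl ()) i with u | e | p <;> rw [hp] at hi
        · have hi' : x ∈ BarL G (π1 (playSeq (BarP1 G) π1 π2 (Sum.inl ()) i).2 (Sum.inl u)) := hi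
          rw [hstep1 _ (Sum.inl u) rfl] at hi'
          simp only [Set.mem_singleton_iff] at hi'
          simp [hi']
        · have hx2 : x = some (f e) := hi
          exact Set.mem_insert_of_mem _ ⟨f e, hfU e, hx2.symm⟩
        · have hi' : x ∈ BarL G (π1 (playSeq (BarP1 G) π1 π2 (Sum.inl ()) i).2
              (Sum.inr (Sum.inr p))) := hi
          rw [hstep1 _ (Sum.inr (Sum.inr p)) rfl] at hi'
          simp only [Set.mem_singleton_iff] at hi'
          simp [hi']
    have h1 : (⋃ i, BarL G (play (BarP1 G) π1 π2 (Sum.inl ()) i)).ncard ≤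
        (insert (none : Option V) (some '' U)).ncard :=
      Set.ncard_le_ncard hsub (Set.toFinite _)
    have h2 : (insert (none : Option V) (some '' U)).ncard = U.ncard + 1 := by
      rw [Set.ncard_insert_of_notMem (by simp) (Set.toFinite _),
        Set.ncard_image_of_injective _ (Option.some_injective V)]
    have h3 := hwin π2 hπ2
    omega
  · intro hcov
    obtain ⟨e0, he0⟩ := hne
    refine ⟨strat1VC G ⟨e0, he0⟩, strat1VC_isStrat G _, ?_⟩
    intro π2 hπ2
    set π1 := strat1VC G ⟨e0, he0⟩ with hπ1def
    have key : ∀ k : ℕ,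
        play (BarP1 G) π1 π2 (Sum.inl ()) (3 * k) = Sum.inl () ∧
        min k m ≤ (collectedVC G (playSeq (BarP1 G) π1 π2 (Sum.inl ()) (3 * k)).2).ncard := by
      intro k
      induction k with
      | zero => exact ⟨rfl, by simp⟩
      | succ k ih =>
        obtain ⟨hpk, hck⟩ := ih
        have e3 : 3 * (k + 1) = 3 * k + 1 + 1 + 1 := by ring
        set W : List (BarV G) := (playSeq (BarP1 G) π1 π2 (Sum.inl ()) (3 * k)).2 with hW
        set S : Set V := collectedVC G W with hS
        -- choice of edge by player 1
        have hedge : ∃ eE : G.edgeSet, π1 W (Sum.inl ()) = Sum.inr (Sum.inl eE) ∧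
            ((∃ a b, G.Adj a b ∧ a ∉ S ∧ b ∉ S) → ∀ u ∈ (eE : Sym2 V), u ∉ S) := by
          by_cases hc : ∃ a b, G.Adj a b ∧ a ∉ collectedVC G W ∧ b ∉ collectedVC G W
          · refine ⟨⟨s(hc.choose, hc.choose_spec.choose),
                G.mem_edgeSet.mpr hc.choose_spec.choose_spec.1⟩, ?_, ?_⟩
            · rw [hπ1def]
              dsimp only [strat1VC]
              erw [dif_pos hc]
            · intro _ u hu
              rcases Sym2.mem_iff.1 hu with rfl | rfl
              · exact hc.choose_spec.choose_spec.2.1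
              · exact hc.choose_spec.choose_spec.2.2
          · exact ⟨⟨e0, he0⟩, by rw [hπ1def]; dsimp only [strat1VC]; erw [dif_neg hc],
              fun h => absurd h hc⟩
        obtain ⟨eE, heE, heEfresh⟩ := hedge
        have h1 : play (BarP1 G) π1 π2 (Sum.inl ()) (3 * k + 1) = Sum.inr (Sum.inl eE) := by
          erw [play_succ, hpk, ← hW]
          exact heE
        obtain ⟨p, hpeq, hp1⟩ := barE_edge_succ G eE _
          (hπ2 (playSeq (BarP1 G) π1 π2 (Sum.inl ()) (3 * k + 1)).2 (Sum.inr (Sum.inl eE)) rfl)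
        have h2 : play (BarP1 G) π1 π2 (Sum.inl ()) (3 * k + 1 + 1) = Sum.inr (Sum.inr p) := by
          erw [play_succ, h1]
          exact hpeq
        have h3 : play (BarP1 G) π1 π2 (Sum.inl ()) (3 * k + 1 + 1 + 1) = Sum.inl () := by
          erw [play_succ, h2, hπ1def]
          rfl
        have hsubS : S ⊆ collectedVC G (playSeq (BarP1 G) π1 π2 (Sum.inl ()) (3 * k + 1 + 1 + 1)).2 := by
          erw [playSeq_succ_snd, playSeq_succ_snd, playSeq_succ_snd, ← hW]
          intro u hu
          exact collectedVC_mono G _ _ (collectedVC_mono G _ _ (collectedVC_mono G _ _ hu))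
        rw [e3]
        refine ⟨h3, ?_⟩
        by_cases hc : ∃ a b, G.Adj a b ∧ a ∉ S ∧ b ∉ S
        · -- fresh endpoint collected
          have hfresh : p.val.2 ∉ S := by
            have hmem : p.val.2 ∈ (eE : Sym2 V) := hp1 ▸ p.property.2
            exact heEfresh hc _ hmem
          have hpmem : p.val.2 ∈
              collectedVC G (playSeq (BarP1 G) π1 π2 (Sum.inl ()) (3 * k + 1 + 1 + 1)).2 := by
            refine ⟨p, ?_, rfl⟩
            erw [playSeq_succ_snd, ← h2]
            exact List.mem_append_right _ (List.mem_singleton_self _)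
          have hins : insert p.val.2 S ⊆
              collectedVC G (playSeq (BarP1 G) π1 π2 (Sum.inl ()) (3 * k + 1 + 1 + 1)).2 := by
            rintro u (rfl | hu)
            · exact hpmem
            · exact hsubS hu
          have hc1 : (insert p.val.2 S).ncard = S.ncard + 1 :=
            Set.ncard_insert_of_notMem hfresh (Set.toFinite _)
          have hc2 := Set.ncard_le_ncard hins (Set.toFinite _)
          have := Set.ncard_le_ncard hsubS (Set.toFinite _)
          omega
        · -- S is a vertex cover, so already large
          have hScover : IsVertexCover G S := by
            intro a b hab
            by_contra hn
            push_neg at hn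
            exact hc ⟨a, b, hab, hn.1, hn.2⟩
          have hm := hcov S hScover
          have := Set.ncard_le_ncard hsubS (Set.toFinite _)
          omega
    obtain ⟨hpm, hcm⟩ := key m
    rw [Nat.min_self] at hcm
    have hsub : insert (none : Option V)
        (some '' collectedVC G (playSeq (BarP1 G) π1 π2 (Sum.inl ()) (3 * m)).2) ⊆
        ⋃ i, BarL G (play (BarP1 G) π1 π2 (Sum.inl ()) i) := by
      rintro x hx
      rcases Set.mem_insert_iff.1 hx with rfl | ⟨u, hu, rfl⟩
      · exact Set.mem_iUnion.2 ⟨0, rfl⟩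
      · obtain ⟨p, hpmem, hpu⟩ := hu
        obtain ⟨j, hj⟩ := mem_playSeq_snd _ _ _ _ _ _ hpmem
        refine Set.mem_iUnion.2 ⟨j, ?_⟩
        erw [hj]
        simp [BarL, hpu]
    have h1 := Set.ncard_le_ncard hsub (Set.toFinite _)
    have h2 : (insert (none : Option V)
        (some '' collectedVC G (playSeq (BarP1 G) π1 π2 (Sum.inl ()) (3 * m)).2)).ncard =
        (collectedVC G (playSeq (BarP1 G) π1 π2 (Sum.inl ()) (3 * m)).2).ncard + 1 := by
      rw [Set.ncard_insert_of_notMem (by simp) (Set.toFinite _),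
        Set.ncard_image_of_injective _ (Option.some_injective V)]
    omega
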